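/- For a supermodular function F on ground set V and any sets X, Y ⊆ V, the modular function m_X(Y) := F(X) - Σ_{j ∈ X\Y} F(j | X\{j}) + Σ_{j ∈ Y\X} F({j}) satisfies m_X(Y) ≤ F(Y) and m_X(X) = F(X). -/

import Mathlib

open Finset

def Supermodular {V : Type*} [DecidableEq V] (F : Finset V → ℝ) : Prop :=
  ∀ A B : Finset V, ∀ v : V, A ⊆ B → v ∉ B →
    F (insert v A) - F A ≤ F (insert v B) - F B

lemma supermod_down {V : Type*} [DecidableEq V] (F : Finset V → ℝ)
    (hsup : Supermodular F) (X : Finset V) :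
    ∀ D : Finset V, D ⊆ X →
      F X - ∑ j ∈ D, (F (insert j (X.erase j)) - F (X.erase j)) ≤ F (X \ D) := by
  intro D
  induction D using Finset.induction with
  | empty => simp
  | @insert a D ha ih =>
    intro hsub
    have haX : a ∈ X := hsub (mem_insert_self a D)
    have hD : D ⊆ X := (subset_insert a D).trans hsub
    rw [sum_insert ha]
    have haXD : a ∈ X \ D := mem_sdiff.2 ⟨haX, ha⟩
    have key : F (X \ D) - (F (insert a (X.erase a)) - F (X.erase a))
        ≤ F ((X \ D).erase a) := by
      have h1 : F (insert a ((X \ D).erase a)) - F ((X \ D).erase a)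
          ≤ F (insert a (X.erase a)) - F (X.erase a) := by
        apply hsup _ _ a
        · exact erase_subset_erase a (sdiff_subset)
        · exact notMem_erase a X
      rw [insert_erase haXD] at h1
      linarith
    have h2 : (X \ D).erase a = X \ insert a D := by
      ext x; simp [mem_erase, mem_sdiff, and_comm, and_assoc, not_or]
      tauto
    rw [h2] at key
    have := ih hD
    linarith

lemma supermod_up {V : Type*} [DecidableEq V] (F : Finset V → ℝ)
    (hsup : Supermodular F) (h0 : F ∅ = 0) :
    ∀ U S : Finset V, (∀ j ∈ U, j ∉ S) →
      F S + ∑ j ∈ U, F {j} ≤ F (S ∪ U) := by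
  intro U
  induction U using Finset.induction with
  | empty => simp
  | @insert a U ha ih =>
    intro S hdis
    have hU : ∀ j ∈ U, j ∉ S := fun j hj => hdis j (mem_insert_of_mem hj)
    have haSU : a ∉ S ∪ U := by
      simp [ha, hdis a (mem_insert_self a U)]
    have h1 : F {a} ≤ F (insert a (S ∪ U)) - F (S ∪ U) := by
      have := hsup ∅ (S ∪ U) a (empty_subset _) haSU
      simpa [h0] using this
    have h2 : insert a (S ∪ U) = S ∪ insert a U := by
      ext x; simp [or_comm, or_assoc]
    rw [h2] at h1
    rw [sum_insert ha]
    have := ih S hU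
    linarith

/-- The supermodular modular lower bound `m_X` is tight at `X` and below `F` everywhere. -/
theorem supermodular_modular_lower_bound
    {V : Type*} [Fintype V] [DecidableEq V]
    (F : Finset V → ℝ) (hsup : Supermodular F) (h0 : F ∅ = 0)
    (X Y : Finset V) :
    (F X - ∑ j ∈ X \ Y, (F (insert j (X.erase j)) - F (X.erase j))
         + ∑ j ∈ Y \ X, F {j} ≤ F Y)
    ∧ (F X - ∑ j ∈ X \ X, (F (insert j (X.erase j)) - F (X.erase j))
         + ∑ j ∈ X \ X, F {j} = F X) := by
  constructor
  · have hdown := supermod_down F hsup X (X \ Y) sdiff_subset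
    have hXXY : X \ (X \ Y) = X ∩ Y := sdiff_sdiff_self_left X Y
    rw [hXXY] at hdown
    have hup := supermod_up F hsup h0 (Y \ X) (X ∩ Y)
      (fun j hj => by simp_all [mem_sdiff, mem_inter])
    have hu : (X ∩ Y) ∪ (Y \ X) = Y := by
      ext x; simp [mem_union, mem_inter, mem_sdiff]; tauto
    rw [hu] at hup
    linarith
  · simp
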